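/- For every δ > 0 there exists a finite set S ⊆ ([−M,M]^p)^k with cardinality at most (max{⌊8 M² τ H_p k p / δ⌋, 1})^{k p} such that for every Θ ∈ ([−M,M]^p)^k there is Θ′ ∈ S with sup over x ∈ [−M,M]^p of |f_Θ(x) − f_{Θ′}(x)| at most δ. In other words, the δ-covering number, under the supremum norm on [−M,M]^p, of the function class F = {f_Θ restricted to [−M,M]^p : Θ ∈ ([−M,M]^p)^k} is at most (max{⌊8 M² τ H_p k p / δ⌋, 1})^{k p}. -/

import Mathlib

open MeasureTheory ProbabilityTheory Real Filter
open scoped ENNReal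

/-- Bregman divergence generated by a differentiable function `φ`. -/
noncomputable def dphi {p : ℕ} (φ : EuclideanSpace ℝ (Fin p) → ℝ)
    (x y : EuclideanSpace ℝ (Fin p)) : ℝ :=
  φ x - φ y - inner ℝ (gradient φ y) (x - y)

/-- The cube `[-M, M]^p` in `ℝ^p`. -/
def cube (p : ℕ) (M : ℝ) : Set (EuclideanSpace ℝ (Fin p)) := {x | ∀ i, |x i| ≤ M}

/-- The clustering objective `f_Θ(x) = Ψ(d_φ(x,θ₁),…,d_φ(x,θ_k))`. -/
noncomputable def fTheta {p k : ℕ} (φ : EuclideanSpace ℝ (Fin p) → ℝ)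
    (Ψ : (Fin k → ℝ) → ℝ) (Θ : Fin k → EuclideanSpace ℝ (Fin p))
    (x : EuclideanSpace ℝ (Fin p)) : ℝ :=
  Ψ (fun j => dphi φ x (Θ j))

section Aux

variable {p : ℕ}

/-- Gradient inequality for convex differentiable functions. -/
lemma grad_ineq (φ : EuclideanSpace ℝ (Fin p) → ℝ)
    (hconv : ConvexOn ℝ Set.univ φ) (hdiff : Differentiable ℝ φ)
    (x y : EuclideanSpace ℝ (Fin p)) :
    φ x + inner ℝ (gradient φ x) (y - x) ≤ φ y := by
  have hF : HasFDerivAt φ ((InnerProductSpace.toDual ℝ _) (gradient φ x)) x :=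
    hasGradientAt_iff_hasFDerivAt.mp (hdiff x).hasGradientAt
  have hcd : HasDerivAt (fun t : ℝ => AffineMap.lineMap x y t) (y - x) 0 := by
    simp only [AffineMap.lineMap_apply, vsub_eq_sub, vadd_eq_add]
    simpa using ((hasDerivAt_id (0:ℝ)).smul_const (y - x)).add_const x
  have hF' : HasFDerivAt φ ((InnerProductSpace.toDual ℝ _) (gradient φ x))
      ((fun t : ℝ => AffineMap.lineMap x y t) 0) := by
    simpa using hF
  have hd : HasDerivAt (φ ∘ fun t : ℝ => AffineMap.lineMap x y t)
      (inner ℝ (gradient φ x) (y - x) : ℝ) 0 := by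
    simpa [InnerProductSpace.toDual_apply_apply] using
      HasFDerivAt.comp_hasDerivAt (0:ℝ) hF' hcd
  have hconvg : ConvexOn ℝ Set.univ (φ ∘ fun t : ℝ => AffineMap.lineMap x y t) := by
    have := hconv.comp_affineMap (AffineMap.lineMap x y)
    simpa [Function.comp] using this
  have hslope := hconvg.le_slope_of_hasDerivAt (Set.mem_univ (0:ℝ)) (Set.mem_univ 1)
    one_pos hd
  rw [slope_def_field] at hslope
  simp only [Function.comp_apply, AffineMap.lineMap_apply_one, AffineMap.lineMap_apply_zero,
    sub_zero, div_one] at hslope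
  linarith

lemma dphi_nonneg (φ : EuclideanSpace ℝ (Fin p) → ℝ)
    (hconv : ConvexOn ℝ Set.univ φ) (hdiff : Differentiable ℝ φ)
    (x y : EuclideanSpace ℝ (Fin p)) : 0 ≤ dphi φ x y := by
  have := grad_ineq φ hconv hdiff y x
  simp only [dphi]
  linarith

lemma dphi_le (φ : EuclideanSpace ℝ (Fin p) → ℝ)
    (hconv : ConvexOn ℝ Set.univ φ) (hdiff : Differentiable ℝ φ)
    (θ θ' : EuclideanSpace ℝ (Fin p)) :
    dphi φ θ θ' ≤ inner ℝ (gradient φ θ - gradient φ θ') (θ - θ') := by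
  have h := grad_ineq φ hconv hdiff θ θ'
  have h2 : (inner ℝ (gradient φ θ) (θ' - θ) : ℝ) = - inner ℝ (gradient φ θ) (θ - θ') := by
    rw [← inner_neg_right]
    congr 1
    abel
  rw [h2] at h
  simp only [dphi, inner_sub_left]
  linarith

lemma dphi_sub (φ : EuclideanSpace ℝ (Fin p) → ℝ)
    (x θ θ' : EuclideanSpace ℝ (Fin p)) :
    dphi φ x θ - dphi φ x θ' =
      -(dphi φ θ θ') + inner ℝ (gradient φ θ' - gradient φ θ) (x - θ) := by
  simp only [dphi, inner_sub_left, inner_sub_right]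
  ring

lemma dphi_diff_bound {M H : ℝ} (hH : 0 ≤ H)
    (φ : EuclideanSpace ℝ (Fin p) → ℝ)
    (hconv : ConvexOn ℝ Set.univ φ) (hdiff : Differentiable ℝ φ)
    (hgradlip : ∀ x ∈ cube p M, ∀ y ∈ cube p M,
      ‖gradient φ x - gradient φ y‖ ≤ H * ‖x - y‖)
    {x θ θ' : EuclideanSpace ℝ (Fin p)}
    (hx : x ∈ cube p M) (hθ : θ ∈ cube p M) (hθ' : θ' ∈ cube p M) :
    |dphi φ x θ - dphi φ x θ'| ≤ H * (‖θ - θ'‖ * (‖θ - θ'‖ + ‖x - θ‖)) := by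
  have h0 : 0 ≤ dphi φ θ θ' := dphi_nonneg φ hconv hdiff θ θ'
  have hub : dphi φ θ θ' ≤ H * (‖θ - θ'‖ * ‖θ - θ'‖) := by
    refine (dphi_le φ hconv hdiff θ θ').trans ?_
    calc (inner ℝ (gradient φ θ - gradient φ θ') (θ - θ') : ℝ)
        ≤ ‖gradient φ θ - gradient φ θ'‖ * ‖θ - θ'‖ := real_inner_le_norm _ _
      _ ≤ (H * ‖θ - θ'‖) * ‖θ - θ'‖ :=
          mul_le_mul_of_nonneg_right (hgradlip θ hθ θ' hθ') (norm_nonneg _)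
      _ = H * (‖θ - θ'‖ * ‖θ - θ'‖) := by ring
  have hcs : |(inner ℝ (gradient φ θ' - gradient φ θ) (x - θ) : ℝ)|
      ≤ (H * ‖θ' - θ‖) * ‖x - θ‖ :=
    (abs_real_inner_le_norm _ _).trans
      (mul_le_mul_of_nonneg_right (hgradlip θ' hθ' θ hθ) (norm_nonneg _))
  rw [norm_sub_rev θ' θ] at hcs
  rcases abs_le.mp hcs with ⟨hcs1, hcs2⟩
  rw [dphi_sub, abs_le]
  constructor <;> nlinarith [norm_nonneg (x - θ), norm_nonneg (θ - θ')]

lemma norm_le_sqrt_mul (a : EuclideanSpace ℝ (Fin p)) (c : ℝ) (hc : 0 ≤ c)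
    (h : ∀ i, |a i| ≤ c) : ‖a‖ ≤ Real.sqrt p * c := by
  rw [EuclideanSpace.norm_eq]
  calc Real.sqrt (∑ i, ‖a i‖ ^ 2) ≤ Real.sqrt ((p : ℝ) * c ^ 2) := by
        apply Real.sqrt_le_sqrt
        calc ∑ i, ‖a i‖ ^ 2 ≤ ∑ _i : Fin p, c ^ 2 := by
              refine Finset.sum_le_sum fun i _ => ?_
              rw [Real.norm_eq_abs]
              exact pow_le_pow_left₀ (abs_nonneg _) (h i) 2
          _ = (p : ℝ) * c ^ 2 := by
              simp [Finset.sum_const, mul_comm]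
    _ = Real.sqrt p * c := by
        rw [Real.sqrt_mul (Nat.cast_nonneg p), Real.sqrt_sq hc]

lemma gridPt_mem {M : ℝ} (hM : 0 < M) {N n : ℕ} (hN : 1 ≤ N) (hn : n < N) :
    |(-M + (2 * (n : ℝ) + 1) * M / (N : ℝ))| ≤ M := by
  have hN0 : (0 : ℝ) < N := by exact_mod_cast lt_of_lt_of_le one_pos hN
  have hn' : (n : ℝ) + 1 ≤ N := by exact_mod_cast hn
  have h1 : 0 ≤ (2 * (n : ℝ) + 1) * M / (N : ℝ) := by positivity
  have h2 : (2 * (n : ℝ) + 1) * M / (N : ℝ) ≤ 2 * M := by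
    rw [div_le_iff₀ hN0]
    nlinarith
  rw [abs_le]
  constructor <;> linarith

lemma gridPt_approx {M : ℝ} (hM : 0 < M) {N : ℕ} (hN : 1 ≤ N) (t : ℝ) (ht : |t| ≤ M) :
    ∃ i : Fin N, |t - (-M + (2 * ((i : ℕ) : ℝ) + 1) * M / (N : ℝ))| ≤ M / N := by
  have hN0 : (0 : ℝ) < N := by exact_mod_cast lt_of_lt_of_le one_pos hN
  rcases abs_le.mp ht with ⟨ht1, ht2⟩
  set s : ℝ := (t + M) * N / (2 * M) with hs
  have hs0 : 0 ≤ s := by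
    apply div_nonneg (mul_nonneg (by linarith) hN0.le) (by linarith)
  have hsN : s ≤ N := by
    rw [hs, div_le_iff₀ (by linarith : (0:ℝ) < 2 * M)]
    nlinarith
  set j : ℕ := min (Nat.floor s) (N - 1) with hj
  have hjN : j < N := lt_of_le_of_lt (min_le_right _ _) (by omega)
  have hjs : (j : ℝ) ≤ s := by
    refine le_trans ?_ (Nat.floor_le hs0)
    exact_mod_cast min_le_left _ _
  have hsj : s ≤ (j : ℝ) + 1 := by
    rcases le_or_gt (Nat.floor s) (N - 1) with h | h
    · have hje : j = Nat.floor s := min_eq_left h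
      rw [hje]
      exact (Nat.lt_floor_add_one s).le
    · have hje : j = N - 1 := min_eq_right h.le
      have : ((N : ℝ) - 1) + 1 ≤ (j : ℝ) + 1 := by
        have : ((N - 1 : ℕ) : ℝ) = (N : ℝ) - 1 := by
          push_cast [Nat.cast_sub hN]
          ring
        rw [hje, this]
      linarith
  refine ⟨⟨j, hjN⟩, ?_⟩
  have hMN : (0 : ℝ) < M / N := by positivity
  have heq : t - (-M + (2 * ((j : ℕ) : ℝ) + 1) * M / (N : ℝ))
      = (2 * s - 2 * (j : ℝ) - 1) * (M / N) := by
    rw [hs]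
    field_simp
    ring
  rw [heq, abs_mul, abs_of_pos hMN]
  have habs : |2 * s - 2 * (j : ℝ) - 1| ≤ 1 := abs_le.mpr ⟨by linarith, by linarith⟩
  calc |2 * s - 2 * (j : ℝ) - 1| * (M / N) ≤ 1 * (M / N) :=
        mul_le_mul_of_nonneg_right habs hMN.le
    _ = M / N := one_mul _

end Aux

/-- Covering number bound for the class `F = {f_Θ : Θ ∈ ([-M,M]^p)^k}` in the
supremum norm on the cube: for every `δ > 0` there is a `δ`-cover of cardinality
at most `(max{⌊8 M² τ H k p / δ⌋, 1})^(k p)`. -/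
theorem covering_number_bound
    {p k : ℕ} (hp : 0 < p) (hk : 0 < k) {M : ℝ} (hM : 0 < M)
    (φ : EuclideanSpace ℝ (Fin p) → ℝ)
    (hφconv : ConvexOn ℝ Set.univ φ) (hφdiff : Differentiable ℝ φ)
    (hφzero : φ 0 = 0) (hgradzero : gradient φ 0 = 0)
    {H : ℝ} (hH : 0 ≤ H)
    (hgradlip : ∀ x ∈ cube p M, ∀ y ∈ cube p M,
      ‖gradient φ x - gradient φ y‖ ≤ H * ‖x - y‖)
    (Ψ : (Fin k → ℝ) → ℝ)
    (hΨnonneg : ∀ u : Fin k → ℝ, (∀ j, 0 ≤ u j) → 0 ≤ Ψ u)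
    (hΨmono : ∀ u v : Fin k → ℝ, (∀ j, 0 ≤ u j) → (∀ j, u j ≤ v j) → Ψ u ≤ Ψ v)
    (hΨzero : Ψ 0 = 0)
    {τ : ℝ} (hτ : 0 < τ)
    (hΨlip : ∀ u v : Fin k → ℝ, (∀ j, 0 ≤ u j) → (∀ j, 0 ≤ v j) →
      |Ψ u - Ψ v| ≤ τ * ∑ j, |u j - v j|)
    :
    ∀ δ : ℝ, 0 < δ →
      ∃ S : Finset (Fin k → EuclideanSpace ℝ (Fin p)),
        S.card ≤ (max (Nat.floor (8 * M ^ 2 * τ * H * k * p / δ)) 1) ^ (k * p) ∧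
        (∀ Θ' ∈ S, ∀ j, Θ' j ∈ cube p M) ∧
        (∀ Θ : Fin k → EuclideanSpace ℝ (Fin p), (∀ j, Θ j ∈ cube p M) →
          ∃ Θ' ∈ S, ∀ x ∈ cube p M, |fTheta φ Ψ Θ x - fTheta φ Ψ Θ' x| ≤ δ) := by
  intro δ hδ
  classical
  set C : ℝ := 8 * M ^ 2 * τ * H * k * p / δ with hCdef
  set N : ℕ := max (Nat.floor C) 1 with hNdef
  have hN1 : 1 ≤ N := le_max_right _ _
  have hN0 : (0 : ℝ) < N := by exact_mod_cast lt_of_lt_of_le one_pos hN1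
  have hN1' : (1 : ℝ) ≤ N := by exact_mod_cast hN1
  -- key numeric inequality
  have hx0 : (0 : ℝ) ≤ M ^ 2 * τ * H * k * p := by positivity
  have hCδ : C * δ = 8 * (M ^ 2 * τ * H * k * p) := by
    rw [hCdef]
    field_simp
  have hkey : 3 * τ * M ^ 2 * H * k * p ≤ (N : ℝ) * δ := by
    have e2 : δ ≤ (N : ℝ) * δ := le_mul_of_one_le_left hδ.le hN1'
    by_cases hC : C < 1
    · have h8 : 8 * (M ^ 2 * τ * H * (k : ℝ) * p) < δ := by
        have := (div_lt_one hδ).mp hC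
        linarith [this]
      linarith
    · push_neg at hC
      have hfl : ((Nat.floor C : ℕ) : ℝ) ≤ (N : ℝ) := by
        exact_mod_cast le_max_left _ _
      have hfl2 : C - 1 < ((Nat.floor C : ℕ) : ℝ) := Nat.sub_one_lt_floor C
      have e1 : (C - 1) * δ ≤ (N : ℝ) * δ :=
        mul_le_mul_of_nonneg_right (by linarith) hδ.le
      nlinarith [e1, e2, hCδ]
  -- the grid
  set G : (Fin k → Fin p → Fin N) → (Fin k → EuclideanSpace ℝ (Fin p)) :=
    fun c => fun j => (WithLp.toLp 2 (fun i => -M + (2 * ((c j i : ℕ) : ℝ) + 1) * M / (N : ℝ)) :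
      EuclideanSpace ℝ (Fin p)) with hG
  refine ⟨Finset.image G Finset.univ, ?_, ?_, ?_⟩
  · -- cardinality
    refine Finset.card_image_le.trans ?_
    rw [Finset.card_univ]
    have : Fintype.card (Fin k → Fin p → Fin N) = N ^ (k * p) := by
      simp [Fintype.card_fun, ← pow_mul, Nat.mul_comm]
    omega
  · -- membership in cube
    intro Θ' hΘ' j
    rcases Finset.mem_image.mp hΘ' with ⟨c, _, rfl⟩
    intro i
    exact gridPt_mem hM hN1 (c j i).isLt
  · -- approximation
    intro Θ hΘ
    have hch : ∀ j i, ∃ m : Fin N,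
        |Θ j i - (-M + (2 * ((m : ℕ) : ℝ) + 1) * M / (N : ℝ))| ≤ M / N :=
      fun j i => gridPt_approx hM hN1 (Θ j i) (hΘ j i)
    choose c hc using hch
    refine ⟨G c, Finset.mem_image.mpr ⟨c, Finset.mem_univ _, rfl⟩, ?_⟩
    intro x hx
    have hGc : ∀ j, G c j ∈ cube p M := by
      intro j i
      exact gridPt_mem hM hN1 (c j i).isLt
    -- per-cluster bound
    have hMN : (0 : ℝ) ≤ M / N := by positivity
    have hMNM : M / N ≤ M := div_le_self hM.le hN1'
    have hper : ∀ j, |dphi φ x (Θ j) - dphi φ x (G c j)|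
        ≤ H * ((p : ℝ) * ((M / N) * (3 * M))) := by
      intro j
      have h1 : ‖Θ j - G c j‖ ≤ Real.sqrt p * (M / N) := by
        apply norm_le_sqrt_mul _ _ hMN
        intro i
        have : (Θ j - G c j) i = Θ j i - G c j i := rfl
        rw [this]
        exact hc j i
      have h2 : ‖x - Θ j‖ ≤ Real.sqrt p * (2 * M) := by
        apply norm_le_sqrt_mul _ _ (by linarith)
        intro i
        have : (x - Θ j) i = x i - Θ j i := rfl
        rw [this]
        have hxi := abs_le.mp (hx i)
        have hti := abs_le.mp (hΘ j i)
        exact abs_le.mpr ⟨by linarith, by linarith⟩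
      have hd := dphi_diff_bound hH φ hφconv hφdiff hgradlip hx (hΘ j) (hGc j)
      have hsq : Real.sqrt p * Real.sqrt p = (p : ℝ) :=
        Real.mul_self_sqrt (Nat.cast_nonneg p)
      have hA0 : (0 : ℝ) ≤ Real.sqrt p * (M / N) := by positivity
      have step1 : ‖Θ j - G c j‖ * (‖Θ j - G c j‖ + ‖x - Θ j‖)
          ≤ (Real.sqrt p * (M / N)) * ((Real.sqrt p * (M / N)) + Real.sqrt p * (2 * M)) :=
        mul_le_mul h1 (add_le_add h1 h2)
          (by positivity) hA0
      have step2 : |dphi φ x (Θ j) - dphi φ x (G c j)|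
          ≤ H * ((Real.sqrt p * (M / N)) * ((Real.sqrt p * (M / N)) + Real.sqrt p * (2 * M))) :=
        hd.trans (mul_le_mul_of_nonneg_left step1 hH)
      have step3 : (Real.sqrt p * (M / N)) * ((Real.sqrt p * (M / N)) + Real.sqrt p * (2 * M))
          = (p : ℝ) * ((M / N) * ((M / N) + 2 * M)) := by
        rw [show (Real.sqrt p * (M / N)) * ((Real.sqrt p * (M / N)) + Real.sqrt p * (2 * M))
            = (Real.sqrt p * Real.sqrt p) * ((M / N) * ((M / N) + 2 * M)) from by ring, hsq]
      rw [step3] at step2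
      refine step2.trans ?_
      have : (M / N) * ((M / N) + 2 * M) ≤ (M / N) * (3 * M) :=
        mul_le_mul_of_nonneg_left (by linarith) hMN
      have hp0 : (0 : ℝ) ≤ (p : ℝ) := Nat.cast_nonneg p
      exact mul_le_mul_of_nonneg_left (mul_le_mul_of_nonneg_left this hp0) hH
    -- sum up
    have hu : ∀ j, 0 ≤ dphi φ x (Θ j) := fun j => dphi_nonneg φ hφconv hφdiff _ _
    have hv : ∀ j, 0 ≤ dphi φ x (G c j) := fun j => dphi_nonneg φ hφconv hφdiff _ _
    have hlip := hΨlip (fun j => dphi φ x (Θ j)) (fun j => dphi φ x (G c j)) hu hv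
    have hsum : ∑ j, |dphi φ x (Θ j) - dphi φ x (G c j)|
        ≤ (k : ℝ) * (H * ((p : ℝ) * ((M / N) * (3 * M)))) := by
      calc ∑ j, |dphi φ x (Θ j) - dphi φ x (G c j)|
          ≤ ∑ _j : Fin k, H * ((p : ℝ) * ((M / N) * (3 * M))) :=
            Finset.sum_le_sum fun j _ => hper j
        _ = (k : ℝ) * (H * ((p : ℝ) * ((M / N) * (3 * M)))) := by
            simp [Finset.sum_const, mul_comm]
    have hfinal : τ * ((k : ℝ) * (H * ((p : ℝ) * ((M / N) * (3 * M))))) ≤ δ := by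
      have heq : τ * ((k : ℝ) * (H * ((p : ℝ) * ((M / N) * (3 * M)))))
          = (3 * τ * M ^ 2 * H * k * p) / N := by
        field_simp
      rw [heq, div_le_iff₀ hN0]
      linarith [hkey]
    calc |fTheta φ Ψ Θ x - fTheta φ Ψ (G c) x|
        ≤ τ * ∑ j, |dphi φ x (Θ j) - dphi φ x (G c j)| := hlip
      _ ≤ τ * ((k : ℝ) * (H * ((p : ℝ) * ((M / N) * (3 * M))))) :=
          mul_le_mul_of_nonneg_left hsum hτ.le
      _ ≤ δ := hfinal
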